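/- In the l¹ or l∞ operator norm, K₄ ≤ K₃, i.e. (1/2^ℓ) Σ_{subsets {r₁<⋯<r_n}} ‖W_{(ℓ+1,r_n)}^abs ⋯ W_{(r₁,0)}^abs‖ ≤ ‖W_ℓ^abs W_{ℓ-1}^abs ⋯ W₀^abs‖. -/

import Mathlib

/-- The l¹ operator norm of a matrix: maximum absolute column sum. -/
noncomputable def l1N {m n : ℕ} (A : Matrix (Fin m) (Fin n) ℝ) : ℝ :=
  ⨆ j, ∑ i, |A i j|

/-- The l∞ operator norm of a matrix: maximum absolute row sum. -/
noncomputable def linfN {m n : ℕ} (A : Matrix (Fin m) (Fin n) ℝ) : ℝ :=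
  ⨆ i, ∑ j, |A i j|

/-- Entrywise absolute value of a matrix. -/
def entAbs {m n : ℕ} (A : Matrix (Fin m) (Fin n) ℝ) : Matrix (Fin m) (Fin n) ℝ :=
  fun i j => |A i j|

/-- The chunk product `W (s+k) * ⋯ * W (s+1) * W s`. -/
def Wchunk (a : ℕ → ℕ) (W : ∀ r : ℕ, Matrix (Fin (a (r+1))) (Fin (a r)) ℝ) (s : ℕ) :
    (k : ℕ) → Matrix (Fin (a (s + k + 1))) (Fin (a s)) ℝ
  | 0 => W s
  | k+1 => W (s + k + 1) * Wchunk a W s k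

/-- The chunk product `W_{(t,s)} = W (t-1) * ⋯ * W s` for `s < t`, cast to its natural type. -/
def Wts (a : ℕ → ℕ) (W : ∀ r : ℕ, Matrix (Fin (a (r+1))) (Fin (a r)) ℝ) (s t : ℕ) :
    Matrix (Fin (a t)) (Fin (a s)) ℝ :=
  if h : s < t then
    (Wchunk a W s (t - s - 1)).submatrix
      (Fin.cast (congrArg a (by omega : t = s + (t - s - 1) + 1))) id
  else 0

/-- Given a decreasing list `[r_n, …, r_1]` of cut points, the product
`nn (W_{(t,r_n)}) * nn (W_{(r_n,r_{n-1})}) * ⋯ * nn (W_{(r_1,0)})` of chunk norms. -/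
noncomputable def chunkNormProd (a : ℕ → ℕ)
    (W : ∀ r : ℕ, Matrix (Fin (a (r+1))) (Fin (a r)) ℝ)
    (nn : ∀ m n : ℕ, Matrix (Fin m) (Fin n) ℝ → ℝ) : ℕ → List ℕ → ℝ
  | t, [] => nn (a t) (a 0) (Wts a W 0 t)
  | t, r :: rest => nn (a t) (a r) (Wts a W r t) * chunkNormProd a W nn r rest

/-- The Combettes–Pesquet bound `K₁`, for the norm `nn`. -/
noncomputable def K1 (a : ℕ → ℕ) (W : ∀ r : ℕ, Matrix (Fin (a (r+1))) (Fin (a r)) ℝ)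
    (nn : ∀ m n : ℕ, Matrix (Fin m) (Fin n) ℝ → ℝ) (ℓ : ℕ) : ℝ :=
  (1 / 2 ^ ℓ) * ∑ S ∈ (Finset.Icc 1 ℓ).powerset,
    chunkNormProd a W nn (ℓ + 1) ((S.sort (· ≤ ·)).reverse)

/-- Given a decreasing list `[r_n, …, r_1]` of cut points, the matrix product
`W_{(t,r_n)}^abs * W_{(r_n,r_{n-1})}^abs * ⋯ * W_{(r_1,0)}^abs`. -/
noncomputable def chunkAbsProd (a : ℕ → ℕ)
    (W : ∀ r : ℕ, Matrix (Fin (a (r+1))) (Fin (a r)) ℝ) :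
    (t : ℕ) → List ℕ → Matrix (Fin (a t)) (Fin (a 0)) ℝ
  | t, [] => entAbs (Wts a W 0 t)
  | t, r :: rest => entAbs (Wts a W r t) * chunkAbsProd a W r rest

/-- The bound `K₄`, for the norm `nn`. -/
noncomputable def K4 (a : ℕ → ℕ) (W : ∀ r : ℕ, Matrix (Fin (a (r+1))) (Fin (a r)) ℝ)
    (nn : ∀ m n : ℕ, Matrix (Fin m) (Fin n) ℝ → ℝ) (ℓ : ℕ) : ℝ :=
  (1 / 2 ^ ℓ) * ∑ S ∈ (Finset.Icc 1 ℓ).powerset,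
    nn (a (ℓ+1)) (a 0) (chunkAbsProd a W (ℓ + 1) ((S.sort (· ≤ ·)).reverse))

/-- The product `W ℓ * D ℓ * W (ℓ-1) * D (ℓ-1) * ⋯ * D 1 * W 0`. -/
def chainWD (a : ℕ → ℕ) (W : ∀ r : ℕ, Matrix (Fin (a (r+1))) (Fin (a r)) ℝ)
    (D : ∀ r : ℕ, Matrix (Fin (a r)) (Fin (a r)) ℝ) :
    (k : ℕ) → Matrix (Fin (a (k+1))) (Fin (a 0)) ℝ
  | 0 => W 0
  | k+1 => W (k+1) * (D (k+1) * chainWD a W D k)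

/-- The product `W ℓ ^abs * ⋯ * W 0 ^abs` of the entrywise absolute values. -/
def absWprod (a : ℕ → ℕ) (W : ∀ r : ℕ, Matrix (Fin (a (r+1))) (Fin (a r)) ℝ) :
    (k : ℕ) → Matrix (Fin (a (k+1))) (Fin (a 0)) ℝ
  | 0 => entAbs (W 0)
  | k+1 => entAbs (W (k+1)) * absWprod a W k

section aux
variable (a : ℕ → ℕ) (W : ∀ r : ℕ, Matrix (Fin (a (r+1))) (Fin (a r)) ℝ)

lemma Wchunk_congr (s : ℕ) {k k' : ℕ} (h : k = k') :
    Wchunk a W s k = (Wchunk a W s k').submatrix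
      (Fin.cast (congrArg a (by omega : s + k + 1 = s + k' + 1))) id := by
  subst h; rfl

lemma Wts_self_succ (s : ℕ) : Wts a W s (s+1) = W s := by
  unfold Wts
  rw [dif_pos (by omega : s < s + 1), Wchunk_congr a W s (show s+1-s-1 = 0 by omega)]
  rfl

lemma Wts_succ (s t : ℕ) (h : s < t) : Wts a W s (t+1) = W t * Wts a W s t := by
  obtain ⟨m, rfl⟩ : ∃ m, t = s + m + 1 := ⟨t - s - 1, by omega⟩
  unfold Wts
  rw [dif_pos (by omega), dif_pos (by omega),
    Wchunk_congr a W s (show s+m+1+1-s-1 = m+1 by omega),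
    Wchunk_congr a W s (show s+m+1-s-1 = m by omega)]
  show ((W (s+m+1) * Wchunk a W s m).submatrix _ id).submatrix _ id = _
  ext i j
  simp [Matrix.mul_apply, Matrix.submatrix_apply]

lemma Wts_split : ∀ (t r s : ℕ), s < r → r < t →
    Wts a W s t = Wts a W r t * Wts a W s r := by
  intro t
  induction t with
  | zero => omega
  | succ t ih =>
    intro r s hsr hrt
    rcases Nat.lt_or_ge r t with h | h
    · rw [Wts_succ a W s t (by omega), ih r s hsr h, Wts_succ a W r t h, Matrix.mul_assoc]
    · have : r = t := by omega
      subst this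
      rw [Wts_succ a W s r hsr, Wts_self_succ]

end aux

section aux2
variable (a : ℕ → ℕ) (W : ∀ r : ℕ, Matrix (Fin (a (r+1))) (Fin (a r)) ℝ)

lemma Wchunk_nonneg (hW : ∀ r i j, 0 ≤ W r i j) (s : ℕ) :
    ∀ k i j, 0 ≤ Wchunk a W s k i j := by
  intro k
  induction k with
  | zero => exact hW s
  | succ k ih =>
    intro i j
    show 0 ≤ ∑ x, W (s+k+1) i x * Wchunk a W s k x j
    exact Finset.sum_nonneg fun x _ => mul_nonneg (hW _ _ _) (ih _ _)

lemma Wts_nonneg (hW : ∀ r i j, 0 ≤ W r i j) (s t : ℕ) (i j) :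
    0 ≤ Wts a W s t i j := by
  unfold Wts
  split
  · exact Wchunk_nonneg a W hW s _ _ _
  · exact le_refl 0

lemma abs_Wchunk_le (s : ℕ) :
    ∀ k i j, |Wchunk a W s k i j| ≤ Wchunk a (fun r => fun i j => |W r i j|) s k i j := by
  intro k
  induction k with
  | zero => intro i j; exact le_refl _
  | succ k ih =>
    intro i j
    show |∑ x, W (s+k+1) i x * Wchunk a W s k x j| ≤ _
    refine (Finset.abs_sum_le_sum_abs _ _).trans (Finset.sum_le_sum fun x _ => ?_)
    rw [abs_mul]
    exact mul_le_mul_of_nonneg_left (ih x j) (abs_nonneg _)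

lemma abs_Wts_le (s t : ℕ) (i j) :
    |Wts a W s t i j| ≤ Wts a (fun r => fun i j => |W r i j|) s t i j := by
  unfold Wts
  split
  · exact abs_Wchunk_le a W s _ _ _
  · simp

end aux2

lemma mul_ent_mono {m n p : ℕ} {A A' : Matrix (Fin m) (Fin n) ℝ} {B B' : Matrix (Fin n) (Fin p) ℝ}
    (hA0 : ∀ i j, 0 ≤ A i j) (hA : ∀ i j, A i j ≤ A' i j)
    (hB0 : ∀ i j, 0 ≤ B i j) (hB : ∀ i j, B i j ≤ B' i j) :
    ∀ i j, (A * B) i j ≤ (A' * B') i j := by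
  intro i j
  rw [Matrix.mul_apply, Matrix.mul_apply]
  refine Finset.sum_le_sum fun x _ => mul_le_mul (hA _ _) (hB _ _) (hB0 _ _) ?_
  exact le_trans (hA0 _ _) (hA _ _)

lemma l1N_mono {m n : ℕ} {A B : Matrix (Fin m) (Fin n) ℝ}
    (h : ∀ i j, |A i j| ≤ |B i j|) : l1N A ≤ l1N B := by
  unfold l1N
  cases isEmpty_or_nonempty (Fin n) with
  | inl he => simp [Real.iSup_of_isEmpty]
  | inr hn =>
    exact ciSup_mono (Set.Finite.bddAbove (Set.finite_range _))
      (fun j => Finset.sum_le_sum fun i _ => h i j)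

lemma linfN_mono {m n : ℕ} {A B : Matrix (Fin m) (Fin n) ℝ}
    (h : ∀ i j, |A i j| ≤ |B i j|) : linfN A ≤ linfN B := by
  unfold linfN
  cases isEmpty_or_nonempty (Fin m) with
  | inl he => simp [Real.iSup_of_isEmpty]
  | inr hn =>
    exact ciSup_mono (Set.Finite.bddAbove (Set.finite_range _))
      (fun i => Finset.sum_le_sum fun j _ => h i j)


section main
variable (a : ℕ → ℕ) (W : ∀ r : ℕ, Matrix (Fin (a (r+1))) (Fin (a r)) ℝ)

lemma chunkAbsProd_nonneg : ∀ (L : List ℕ) (t : ℕ) i j, 0 ≤ chunkAbsProd a W t L i j := by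
  intro L
  induction L with
  | nil => intro t i j; exact abs_nonneg _
  | cons r rest ih =>
    intro t i j
    show 0 ≤ ∑ x, entAbs (Wts a W r t) i x * chunkAbsProd a W r rest x j
    exact Finset.sum_nonneg fun x _ => mul_nonneg (abs_nonneg _) (ih r x j)

lemma chunkAbsProd_le : ∀ (L : List ℕ) (t : ℕ), 0 < t → (∀ r ∈ L, 0 < r) →
    List.Chain' (· > ·) (t :: L) →
    ∀ i j, chunkAbsProd a W t L i j ≤ Wts a (fun r => entAbs (W r)) 0 t i j := by
  intro L
  induction L with
  | nil =>
    intro t ht _ _ i j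
    exact abs_Wts_le a W 0 t i j
  | cons r rest ih =>
    intro t ht h0 hc i j
    have hrt : r < t := (List.isChain_cons_cons.mp hc).1
    have hr : 0 < r := h0 r List.mem_cons_self
    rw [Wts_split a (fun r => entAbs (W r)) t r 0 hr hrt]
    show (entAbs (Wts a W r t) * chunkAbsProd a W r rest) i j ≤ _
    refine mul_ent_mono (fun i j => abs_nonneg _) (fun i j => abs_Wts_le a W r t i j)
      (chunkAbsProd_nonneg a W rest r) ?_ i j
    exact ih r hr (fun x hx => h0 x (List.mem_cons_of_mem _ hx)) (List.isChain_cons_cons.mp hc).2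

lemma Wts_abs_eq_absWprod : ∀ ℓ : ℕ,
    Wts a (fun r => entAbs (W r)) 0 (ℓ+1) = absWprod a W ℓ := by
  intro ℓ
  induction ℓ with
  | zero => exact Wts_self_succ a _ 0
  | succ k ih =>
    rw [Wts_succ a _ 0 (k+1) (by omega), ih]
    rfl

lemma list_props (ℓ : ℕ) (S : Finset ℕ) (hS : S ⊆ Finset.Icc 1 ℓ) :
    (∀ r ∈ (S.sort (· ≤ ·)).reverse, 0 < r) ∧
    List.Chain' (· > ·) ((ℓ+1) :: (S.sort (· ≤ ·)).reverse) := by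
  have hmem : ∀ r ∈ (S.sort (· ≤ ·)).reverse, 1 ≤ r ∧ r ≤ ℓ := by
    intro r hr
    rw [List.mem_reverse, Finset.mem_sort] at hr
    exact Finset.mem_Icc.mp (hS hr)
  refine ⟨fun r hr => (hmem r hr).1, ?_⟩
  rw [List.Chain', List.isChain_cons]
  constructor
  · intro y hy
    have : y ∈ (S.sort (· ≤ ·)).reverse := List.mem_of_mem_head? hy
    have := (hmem y this).2
    omega
  · have hs : List.Pairwise (· < ·) (S.sort (· ≤ ·)) := (Finset.sortedLT_sort S).pairwise
    rw [List.isChain_iff_pairwise, List.pairwise_reverse]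
    exact hs

theorem K4_le_K3'
    (ℓ : ℕ) :
    K4 a W (fun _ _ A => l1N A) ℓ ≤ l1N (absWprod a W ℓ) ∧
    K4 a W (fun _ _ A => linfN A) ℓ ≤ linfN (absWprod a W ℓ) := by
  have key : ∀ S ∈ (Finset.Icc 1 ℓ).powerset, ∀ i j,
      |chunkAbsProd a W (ℓ + 1) ((S.sort (· ≤ ·)).reverse) i j| ≤ |absWprod a W ℓ i j| := by
    intro S hS i j
    obtain ⟨h0, hc⟩ := list_props ℓ S (Finset.mem_powerset.mp hS)
    have h1 := chunkAbsProd_le a W _ (ℓ+1) (by omega) h0 hc i j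
    rw [Wts_abs_eq_absWprod] at h1
    have h2 := chunkAbsProd_nonneg a W ((S.sort (· ≤ ·)).reverse) (ℓ+1) i j
    rw [abs_of_nonneg h2]
    exact h1.trans (le_abs_self _)
  have hcard : ((Finset.Icc 1 ℓ).powerset.card : ℝ) = 2 ^ ℓ := by
    rw [Finset.card_powerset, Nat.card_Icc]
    simp
  constructor
  · unfold K4
    calc (1 / 2 ^ ℓ : ℝ) * ∑ S ∈ (Finset.Icc 1 ℓ).powerset,
          l1N (chunkAbsProd a W (ℓ + 1) ((S.sort (· ≤ ·)).reverse))
        ≤ (1 / 2 ^ ℓ) * ∑ _S ∈ (Finset.Icc 1 ℓ).powerset, l1N (absWprod a W ℓ) := by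
          refine mul_le_mul_of_nonneg_left (Finset.sum_le_sum fun S hS => ?_) (by positivity)
          exact l1N_mono (key S hS)
      _ = l1N (absWprod a W ℓ) := by
          rw [Finset.sum_const, nsmul_eq_mul, hcard]
          field_simp
  · unfold K4
    calc (1 / 2 ^ ℓ : ℝ) * ∑ S ∈ (Finset.Icc 1 ℓ).powerset,
          linfN (chunkAbsProd a W (ℓ + 1) ((S.sort (· ≤ ·)).reverse))
        ≤ (1 / 2 ^ ℓ) * ∑ _S ∈ (Finset.Icc 1 ℓ).powerset, linfN (absWprod a W ℓ) := by
          refine mul_le_mul_of_nonneg_left (Finset.sum_le_sum fun S hS => ?_) (by positivity)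
          exact linfN_mono (key S hS)
      _ = linfN (absWprod a W ℓ) := by
          rw [Finset.sum_const, nsmul_eq_mul, hcard]
          field_simp
end main

/-- In the l¹ or l∞ operator norm, `K₄ ≤ K₃ = ‖W ℓ^abs ⋯ W 0^abs‖`. -/
theorem K4_le_K3
    (a : ℕ → ℕ) (ℓ : ℕ) (W : ∀ r : ℕ, Matrix (Fin (a (r+1))) (Fin (a r)) ℝ) :
    K4 a W (fun _ _ A => l1N A) ℓ ≤ l1N (absWprod a W ℓ) ∧
    K4 a W (fun _ _ A => linfN A) ℓ ≤ linfN (absWprod a W ℓ) := by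
  exact K4_le_K3' a W ℓ
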